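/- Let ψ ∈ ℂᵐ⊗ℂⁿ (indexed by Fin m × Fin n) be a vector such that the partial transpose (ψψ†)^{t_A} of the rank-one matrix ψψ† is positive semidefinite. Then ψ is a product vector: there exist e ∈ ℂᵐ and f ∈ ℂⁿ with ψ = e⊗f. -/
import Mathlib

open Matrix ComplexOrder

noncomputable section

/-- Partial transpose of a bipartite matrix with respect to the first factor. -/
def ptA2 {m n : ℕ} (ρ : Matrix (Fin m × Fin n) (Fin m × Fin n) ℂ) :
    Matrix (Fin m × Fin n) (Fin m × Fin n) ℂ :=
  fun x y => ρ (y.1, x.2) (x.1, y.2)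

/-- The rank-one outer product `v v†`. -/
def outer {k : Type*} (v : k → ℂ) : Matrix k k ℂ := Matrix.vecMulVec v (star v)

lemma psd_det_nonneg {k : Type*} [Fintype k] [DecidableEq k] {M : Matrix k k ℂ}
    (hM : M.PosSemidef) : 0 ≤ M.det := by
  rw [hM.isHermitian.det_eq_prod_eigenvalues]
  exact Finset.prod_nonneg fun i _ => RCLike.ofReal_nonneg.mpr (hM.eigenvalues_nonneg i)

/-- A vector whose rank-one projector has positive partial transpose is a product vector. -/
theorem pure_ppt_is_product (m n : ℕ) (ψ : Fin m × Fin n → ℂ)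
    (hppt : (ptA2 (outer ψ)).PosSemidef) :
    ∃ (e : Fin m → ℂ) (f : Fin n → ℂ), ψ = fun x => e x.1 * f x.2 := by
  have hent : ∀ (a : Fin m) (x : Fin n) a' x',
      ptA2 (outer ψ) (a,x) (a',x') = ψ (a',x) * (starRingEnd ℂ) (ψ (a,x')) := by
    intro a x a' x'
    simp [ptA2, outer, Matrix.vecMulVec_apply, Pi.star_apply, RCLike.star_def]
  -- Step A: 2x2 minors
  have stepA : ∀ (a : Fin m) (x : Fin n) a' x',
      Complex.normSq (ψ (a,x') * ψ (a',x)) ≤ Complex.normSq (ψ (a,x) * ψ (a',x')) := by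
    intro a x a' x'
    have hD : ((ptA2 (outer ψ)).submatrix ![(a,x), (a',x')] ![(a,x), (a',x')]).det =
        ((Complex.normSq (ψ (a,x) * ψ (a',x')) -
          Complex.normSq (ψ (a,x') * ψ (a',x)) : ℝ) : ℂ) := by
      rw [Matrix.det_fin_two]
      simp only [Matrix.submatrix_apply, Matrix.cons_val_zero, Matrix.cons_val_one,
        Matrix.head_cons, hent]
      push_cast [← Complex.mul_conj, _root_.map_mul]
      ring
    have hdet := psd_det_nonneg (hppt.submatrix ![(a,x), (a',x')])
    rw [hD] at hdet
    have := Complex.zero_le_real.mp hdet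
    linarith
  -- Key relation
  have key : ∀ (a : Fin m) (x : Fin n) a' x',
      ψ (a,x) * ψ (a',x') = ψ (a,x') * ψ (a',x) := by
    intro a x a' x'
    by_cases hp : ψ (a,x) = 0
    · have h0 : Complex.normSq (ψ (a,x') * ψ (a',x)) ≤ 0 := by
        simpa [hp] using stepA a x a' x'
      have h1 : ψ (a,x') * ψ (a',x) = 0 :=
        Complex.normSq_eq_zero.mp (le_antisymm h0 (Complex.normSq_nonneg _))
      simp [hp, h1]
    · have hD : ((ptA2 (outer ψ)).submatrix ![(a,x), (a,x'), (a',x)]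
          ![(a,x), (a,x'), (a',x)]).det =
          ((-(Complex.normSq (ψ (a,x)) *
            Complex.normSq (ψ (a,x) * ψ (a',x') - ψ (a,x') * ψ (a',x))) : ℝ) : ℂ) := by
        rw [Matrix.det_fin_three]
        simp only [Matrix.submatrix_apply, Matrix.cons_val_zero, Matrix.cons_val_one,
          Matrix.head_cons, Matrix.cons_val_two, Matrix.tail_cons, hent]
        push_cast [← Complex.mul_conj, _root_.map_mul, _root_.map_sub]
        ring
      have hdet := psd_det_nonneg (hppt.submatrix ![(a,x), (a,x'), (a',x)])
      rw [hD] at hdet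
      have hr := Complex.zero_le_real.mp hdet
      have h1 : Complex.normSq (ψ (a,x)) *
          Complex.normSq (ψ (a,x) * ψ (a',x') - ψ (a,x') * ψ (a',x)) = 0 := by
        have := mul_nonneg (Complex.normSq_nonneg (ψ (a,x)))
          (Complex.normSq_nonneg (ψ (a,x) * ψ (a',x') - ψ (a,x') * ψ (a',x)))
        linarith
      have hpne : Complex.normSq (ψ (a,x)) ≠ 0 := fun h => hp (Complex.normSq_eq_zero.mp h)
      have h2 : Complex.normSq (ψ (a,x) * ψ (a',x') - ψ (a,x') * ψ (a',x)) = 0 :=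
        (mul_eq_zero.mp h1).resolve_left hpne
      exact sub_eq_zero.mp (Complex.normSq_eq_zero.mp h2)
  -- Construct the product decomposition
  by_cases hz : ∀ p : Fin m × Fin n, ψ p = 0
  · exact ⟨0, 0, by funext p; simp [hz p]⟩
  · push_neg at hz
    obtain ⟨⟨a0, x0⟩, h0⟩ := hz
    refine ⟨fun a => ψ (a, x0), fun x => ψ (a0, x) / ψ (a0, x0), ?_⟩
    funext p
    obtain ⟨a, x⟩ := p
    have hk := key a0 x0 a x
    field_simp
    linear_combination hk
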